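/- A square real matrix M ∈ ℝ^{n×n} has spectral radius strictly less than 1 if and only if there exists a symmetric positive definite P ∈ ℝ^{n×n} with P - M P Mᵀ positive definite. -/

import Mathlib

open scoped Matrix ComplexOrder NNReal ENNReal

namespace DiscreteLyapunovAux

open Matrix Filter

lemma posDef_map {n : ℕ} {P : Matrix (Fin n) (Fin n) ℝ} (hP : P.PosDef) :
    (P.map Complex.ofReal).PosDef := by
  have hsym : ∀ i j, P j i = P i j := fun i j => by simpa using hP.1.apply i j
  rw [Matrix.posDef_iff_dotProduct_mulVec]
  constructor
  · ext i j
    simp [Matrix.conjTranspose_apply, Matrix.map_apply, hsym i j]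
  · intro x hx
    set a : Fin n → ℝ := fun i => (x i).re with ha
    set b : Fin n → ℝ := fun i => (x i).im with hb
    have hre : (star x ⬝ᵥ ((P.map Complex.ofReal) *ᵥ x)).re
        = a ⬝ᵥ P *ᵥ a + b ⬝ᵥ P *ᵥ b := by
      simp only [dotProduct, mulVec, Pi.star_apply, map_apply, Finset.mul_sum,
        Complex.re_sum, Complex.mul_re, Complex.mul_im, RCLike.star_def,
        Complex.conj_re, Complex.conj_im, Complex.ofReal_re, Complex.ofReal_im]
      rw [← Finset.sum_add_distrib]
      refine Finset.sum_congr rfl fun i _ => ?_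
      rw [← Finset.sum_add_distrib]
      exact Finset.sum_congr rfl fun j _ => by ring
    have him : (star x ⬝ᵥ ((P.map Complex.ofReal) *ᵥ x)).im = 0 := by
      simp only [dotProduct, mulVec, Pi.star_apply, map_apply, Finset.mul_sum,
        Complex.im_sum, Complex.mul_re, Complex.mul_im, RCLike.star_def,
        Complex.conj_re, Complex.conj_im, Complex.ofReal_re, Complex.ofReal_im]
      have step : ∀ i ∈ Finset.univ, ∑ j : Fin n,
          ((x i).re * (P i j * (x j).im + 0 * (x j).re) +
            -(x i).im * (P i j * (x j).re - 0 * (x j).im))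
          = ∑ j : Fin n, (P i j * ((x i).re * (x j).im) - P i j * ((x i).im * (x j).re)) := by
        intro i _
        exact Finset.sum_congr rfl fun j _ => by ring
      rw [Finset.sum_congr rfl step]
      rw [Finset.sum_congr rfl (fun i _ => Finset.sum_sub_distrib _ _), Finset.sum_sub_distrib]
      have hswap : ∑ i : Fin n, ∑ j : Fin n, P i j * ((x i).im * (x j).re)
          = ∑ i : Fin n, ∑ j : Fin n, P i j * ((x i).re * (x j).im) := by
        rw [Finset.sum_comm]
        refine Finset.sum_congr rfl fun j _ => Finset.sum_congr rfl fun i _ => ?_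
        rw [hsym j i]
        ring
      rw [hswap, sub_self]
    rw [Complex.lt_def]
    refine ⟨?_, him.symm⟩
    simp only [Complex.zero_re, hre]
    have hab : a ≠ 0 ∨ b ≠ 0 := by
      by_contra hc
      push_neg at hc
      apply hx
      funext i
      have h1 : (x i).re = 0 := congrFun hc.1 i
      have h2 : (x i).im = 0 := congrFun hc.2 i
      exact Complex.ext h1 h2
    rcases hab with hA | hB
    · have := hP.dotProduct_mulVec_pos hA
      have h2 := hP.posSemidef.dotProduct_mulVec_nonneg b
      simp only [star_trivial] at this h2
      linarith
    · have := hP.dotProduct_mulVec_pos hB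
      have h2 := hP.posSemidef.dotProduct_mulVec_nonneg a
      simp only [star_trivial] at this h2
      linarith

lemma exists_eigenvector_transpose {n : ℕ} (A : Matrix (Fin n) (Fin n) ℂ) {z : ℂ}
    (hz : z ∈ spectrum ℂ A) : ∃ v ≠ 0, Aᵀ *ᵥ v = z • v := by
  have h1 : ¬ IsUnit (algebraMap ℂ (Matrix (Fin n) (Fin n) ℂ) z - A) := spectrum.mem_iff.mp hz
  rw [Algebra.algebraMap_eq_smul_one] at h1
  have hd : (z • (1 : Matrix (Fin n) (Fin n) ℂ) - A).det = 0 := by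
    by_contra hd
    exact h1 ((Matrix.isUnit_iff_isUnit_det _).2 (isUnit_iff_ne_zero.2 hd))
  have hdT : (z • (1 : Matrix (Fin n) (Fin n) ℂ) - Aᵀ).det = 0 := by
    have : (z • (1 : Matrix (Fin n) (Fin n) ℂ) - Aᵀ) = (z • 1 - A)ᵀ := by
      rw [transpose_sub, transpose_smul, transpose_one]
    rw [this, Matrix.det_transpose]
    exact hd
  obtain ⟨v, hv0, hv⟩ := Matrix.exists_mulVec_eq_zero_iff.mpr hdT
  refine ⟨v, hv0, ?_⟩
  rw [Matrix.sub_mulVec, Matrix.smul_mulVec, Matrix.one_mulVec, sub_eq_zero] at hv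
  exact hv.symm

section
attribute [local instance] Matrix.linftyOpNormedRing Matrix.linftyOpNormedAlgebra

lemma entry_bound {n : ℕ} (hn : n ≠ 0) (M : Matrix (Fin n) (Fin n) ℝ)
    (h : ∀ z ∈ spectrum ℂ (M.map Complex.ofReal), ‖z‖ < 1) :
    ∃ r C : ℝ, 0 ≤ r ∧ r < 1 ∧ 0 ≤ C ∧ ∀ k : ℕ, ∀ i j, |(M ^ k) i j| ≤ C * r ^ k := by
  haveI : Nonempty (Fin n) := ⟨⟨0, Nat.pos_of_ne_zero hn⟩⟩
  haveI : CompleteSpace (Matrix (Fin n) (Fin n) ℂ) :=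
    FiniteDimensional.complete ℂ (Matrix (Fin n) (Fin n) ℂ)
  haveI : Nontrivial (Matrix (Fin n) (Fin n) ℂ) := by
    refine ⟨0, 1, fun h0 => ?_⟩
    have := congrFun (congrFun h0 (Classical.arbitrary _)) (Classical.arbitrary _)
    simp [Matrix.one_apply_eq] at this
  set A := M.map Complex.ofReal with hA
  have hentry : ∀ (B : Matrix (Fin n) (Fin n) ℂ) (i j : Fin n), ‖B i j‖ ≤ ‖B‖ := by
    intro B i j
    have h1 : ‖B i j‖₊ ≤ ‖B‖₊ := by
      rw [Matrix.linfty_opNNNorm_def]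
      calc ‖B i j‖₊ ≤ ∑ j' : Fin n, ‖B i j'‖₊ :=
            Finset.single_le_sum (f := fun j' => ‖B i j'‖₊) (fun _ _ => by positivity)
              (Finset.mem_univ j)
        _ ≤ Finset.univ.sup fun i => ∑ j' : Fin n, ‖B i j'‖₊ :=
            Finset.le_sup (f := fun i => ∑ j' : Fin n, ‖B i j'‖₊) (Finset.mem_univ i)
    exact_mod_cast h1
  have hρ : spectralRadius ℂ A < 1 := by
    have h1 := spectrum.spectralRadius_lt_of_forall_lt (a := A) (r := 1)
      (fun z hz => by
        have h2 := h z hz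
        rw [← coe_nnnorm] at h2
        exact_mod_cast h2)
    simpa using h1
  obtain ⟨ρr, hρr1, hρr2⟩ := exists_between hρ
  have hρrtop : ρr ≠ ⊤ := ne_top_of_lt hρr2
  set r' : ℝ≥0 := ρr.toNNReal with hr'
  have hcoe : (r' : ℝ≥0∞) = ρr := ENNReal.coe_toNNReal hρrtop
  have hr'1 : r' < 1 := by
    rw [← ENNReal.coe_lt_one_iff, hcoe]; exact hρr2
  have hT := spectrum.pow_nnnorm_pow_one_div_tendsto_nhds_spectralRadius A
  have hev : ∀ᶠ k : ℕ in atTop, (‖A ^ k‖₊ : ℝ≥0∞) ^ (1 / (k : ℝ)) < ρr :=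
    hT.eventually_lt_const hρr1
  have hev2 : ∀ᶠ k : ℕ in atTop, ‖A ^ k‖ ≤ (r' : ℝ) ^ k := by
    filter_upwards [hev, Filter.eventually_ge_atTop 1] with k hk hk1
    have hk0 : (k : ℝ) ≠ 0 := Nat.cast_ne_zero.mpr (by omega)
    have hle : (‖A ^ k‖₊ : ℝ≥0∞) ≤ (r' : ℝ≥0∞) ^ k := by
      calc (‖A ^ k‖₊ : ℝ≥0∞) = ((‖A ^ k‖₊ : ℝ≥0∞) ^ (1 / (k : ℝ))) ^ (k : ℝ) := by
            rw [← ENNReal.rpow_mul, one_div_mul_cancel hk0, ENNReal.rpow_one]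
        _ ≤ ρr ^ (k : ℝ) := ENNReal.rpow_le_rpow hk.le (Nat.cast_nonneg k)
        _ = (r' : ℝ≥0∞) ^ (k : ℝ) := by rw [hcoe]
        _ = (r' : ℝ≥0∞) ^ k := ENNReal.rpow_natCast _ k
    have : ‖A ^ k‖₊ ≤ r' ^ k := by
      rw [← ENNReal.coe_le_coe, ENNReal.coe_pow]
      exact hle
    calc ‖A ^ k‖ = ((‖A ^ k‖₊ : ℝ≥0) : ℝ) := (coe_nnnorm _).symm
      _ ≤ ((r' ^ k : ℝ≥0) : ℝ) := by exact_mod_cast this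
      _ = (r' : ℝ) ^ k := by push_cast; ring
  obtain ⟨N, hN⟩ := Filter.eventually_atTop.mp hev2
  set r : ℝ := max (r' : ℝ) (1 / 2) with hrdef
  have hr0 : 0 < r := lt_of_lt_of_le (by norm_num) (le_max_right _ _)
  have hr1 : r < 1 := by
    apply max_lt
    · exact_mod_cast hr'1
    · norm_num
  set C : ℝ := 1 + ∑ k ∈ Finset.range N, ‖A ^ k‖ / r ^ k with hCdef
  have hC1 : 1 ≤ C := by
    have : 0 ≤ ∑ k ∈ Finset.range N, ‖A ^ k‖ / r ^ k :=
      Finset.sum_nonneg fun k _ => div_nonneg (norm_nonneg _) (pow_nonneg hr0.le k)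
    simp [hCdef]; linarith
  refine ⟨r, C, hr0.le, hr1, by linarith, fun k i j => ?_⟩
  have hAk : A ^ k = (M ^ k).map Complex.ofReal := by
    have hof : ∀ (B : Matrix (Fin n) (Fin n) ℝ),
        B.map Complex.ofReal = (algebraMap ℝ ℂ).mapMatrix B := fun B => rfl
    rw [hA, hof, hof, map_pow]
  have hMA : |(M ^ k) i j| = ‖(A ^ k) i j‖ := by
    rw [hAk, Matrix.map_apply]
    exact (RCLike.norm_ofReal (K := ℂ) _).symm
  rw [hMA]
  rcases lt_or_ge k N with hkN | hkN
  · have h1 : ‖A ^ k‖ / r ^ k ≤ ∑ m ∈ Finset.range N, ‖A ^ m‖ / r ^ m :=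
      Finset.single_le_sum (f := fun m => ‖A ^ m‖ / r ^ m)
        (fun m _ => div_nonneg (norm_nonneg _) (pow_nonneg hr0.le m))
        (Finset.mem_range.mpr hkN)
    have h2 : ‖A ^ k‖ / r ^ k ≤ C := by rw [hCdef]; linarith
    calc ‖(A ^ k) i j‖ ≤ ‖A ^ k‖ := hentry _ i j
      _ ≤ C * r ^ k := by
        rw [← div_le_iff₀ (pow_pos hr0 k)] at *
        exact h2
  · have h1 : ‖A ^ k‖ ≤ (r' : ℝ) ^ k := hN k hkN
    have h2 : (r' : ℝ) ^ k ≤ r ^ k :=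
      pow_le_pow_left₀ (r' : ℝ≥0).coe_nonneg (le_max_left _ _) k
    calc ‖(A ^ k) i j‖ ≤ ‖A ^ k‖ := hentry _ i j
      _ ≤ r ^ k := le_trans h1 h2
      _ ≤ C * r ^ k := le_mul_of_one_le_left (pow_nonneg hr0.le k) hC1

end


lemma forward {n : ℕ} (hn : n ≠ 0) (M : Matrix (Fin n) (Fin n) ℝ)
    (h : ∀ z ∈ spectrum ℂ (M.map Complex.ofReal), ‖z‖ < 1) :
    ∃ P : Matrix (Fin n) (Fin n) ℝ, P.PosDef ∧ (P - M * P * Mᵀ).PosDef := by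
  obtain ⟨r, C, hr0, hr1, hC0, hbd⟩ := entry_bound hn M h
  set S : ℕ → Matrix (Fin n) (Fin n) ℝ := fun k => M ^ k * (M ^ k)ᵀ with hS
  have hgeo : Summable (fun k : ℕ => (n : ℝ) * C ^ 2 * (r ^ 2) ^ k) :=
    (summable_geometric_of_lt_one (by positivity) (by nlinarith)).mul_left _
  have hSe : ∀ i j, Summable fun k => S k i j := by
    intro i j
    apply Summable.of_norm_bounded hgeo
    intro k
    have hij : S k i j = ∑ l, (M ^ k) i l * (M ^ k) j l := by
      simp only [hS, Matrix.mul_apply, Matrix.transpose_apply]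
    rw [Real.norm_eq_abs, hij]
    calc |∑ l, (M ^ k) i l * (M ^ k) j l| ≤ ∑ l, |(M ^ k) i l * (M ^ k) j l| :=
          Finset.abs_sum_le_sum_abs _ _
      _ ≤ ∑ _l : Fin n, C * r ^ k * (C * r ^ k) := by
          refine Finset.sum_le_sum fun l _ => ?_
          rw [abs_mul]
          exact mul_le_mul (hbd k i l) (hbd k j l) (abs_nonneg _) (by positivity)
      _ = (n : ℝ) * C ^ 2 * (r ^ 2) ^ k := by
          rw [Finset.sum_const, Finset.card_univ, Fintype.card_fin, nsmul_eq_mul]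
          ring
  have hSsum : Summable S := Pi.summable.mpr fun i => Pi.summable.mpr fun j => hSe i j
  set P := ∑' k, S k with hP
  let T : Matrix (Fin n) (Fin n) ℝ →ₗ[ℝ] Matrix (Fin n) (Fin n) ℝ :=
    { toFun := fun X => M * X * Mᵀ
      map_add' := fun X Y => by simp [Matrix.mul_add, Matrix.add_mul]
      map_smul' := fun c X => by simp [Matrix.mul_smul, Matrix.smul_mul] }
  let Tc := T.toContinuousLinearMap
  have hTc : ∀ X, Tc X = M * X * Mᵀ := fun X => rfl
  have hTS : ∀ k, Tc (S k) = S (k + 1) := by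
    intro k
    rw [hTc]
    show M * (M ^ k * (M ^ k)ᵀ) * Mᵀ = M ^ (k + 1) * (M ^ (k + 1))ᵀ
    have hcomm : M * M ^ k = M ^ (k + 1) := (pow_succ' M k).symm
    rw [← mul_assoc, mul_assoc (M * M ^ k), ← Matrix.transpose_mul, hcomm]
  have hshift : HasSum (fun k => S (k + 1)) (P - S 0) := by
    refine (hasSum_nat_add_iff 1).mpr ?_
    simpa using hSsum.hasSum
  have hTP : M * P * Mᵀ = P - S 0 := by
    have h2 : HasSum (fun k => Tc (S k)) (Tc P) := hSsum.hasSum.mapL Tc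
    rw [show (fun k => Tc (S k)) = fun k => S (k + 1) from funext hTS] at h2
    have := h2.unique hshift
    rw [← hTc]
    exact this
  have hS0 : S 0 = 1 := by simp [hS]
  have hkey : P - M * P * Mᵀ = 1 := by
    rw [hTP, hS0, sub_sub_cancel]
  have hPosP : P.PosDef := by
    rw [Matrix.posDef_iff_dotProduct_mulVec]
    constructor
    · have hPt : Pᵀ = P := by
        rw [hP, Matrix.transpose_tsum]
        congr 1
        funext k
        simp [hS, Matrix.transpose_mul, Matrix.transpose_transpose]
      ext i j
      rw [Matrix.conjTranspose_apply, star_trivial]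
      exact congrFun (congrFun hPt i) j
    · intro x hx
      let L : Matrix (Fin n) (Fin n) ℝ →ₗ[ℝ] ℝ :=
        { toFun := fun X => x ⬝ᵥ (X *ᵥ x)
          map_add' := fun X Y => by simp [Matrix.add_mulVec, dotProduct_add]
          map_smul' := fun c X => by simp [Matrix.smul_mulVec, dotProduct_smul] }
      let Lc := L.toContinuousLinearMap
      have hLc : ∀ X, Lc X = x ⬝ᵥ (X *ᵥ x) := fun X => rfl
      have h1 : HasSum (fun k => Lc (S k)) (Lc P) := hSsum.hasSum.mapL Lc
      have hterm : ∀ k, Lc (S k) = (x ᵥ* (M ^ k)) ⬝ᵥ (x ᵥ* (M ^ k)) := by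
        intro k
        rw [hLc]
        show x ⬝ᵥ ((M ^ k * (M ^ k)ᵀ) *ᵥ x) = _
        rw [← Matrix.mulVec_mulVec, Matrix.dotProduct_mulVec, Matrix.mulVec_transpose]
      have hnonneg : ∀ k, 0 ≤ Lc (S k) := by
        intro k
        rw [hterm]
        exact Finset.sum_nonneg fun l _ => mul_self_nonneg _
      have hpos0 : 0 < Lc (S 0) := by
        rw [hLc, hS0, Matrix.one_mulVec]
        obtain ⟨i, hi⟩ := Function.ne_iff.mp hx
        refine Finset.sum_pos' (fun l _ => mul_self_nonneg _) ⟨i, Finset.mem_univ i, ?_⟩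
        exact mul_self_pos.mpr (by simpa using hi)
      have := Summable.tsum_pos h1.summable hnonneg 0 hpos0
      rw [h1.tsum_eq] at this
      rw [star_trivial]
      rw [← hLc]
      exact this
  exact ⟨P, hPosP, by rw [hkey]; exact Matrix.PosDef.one⟩

lemma backward {n : ℕ} (M P : Matrix (Fin n) (Fin n) ℝ) (hP : P.PosDef)
    (hQ : (P - M * P * Mᵀ).PosDef) {z : ℂ}
    (hz : z ∈ spectrum ℂ (M.map Complex.ofReal)) : ‖z‖ < 1 := by
  set Mc := M.map Complex.ofReal with hMcdef
  set Pc := P.map Complex.ofReal with hPcdef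
  obtain ⟨v, hv0, hv⟩ := exists_eigenvector_transpose Mc hz
  have hPc : Pc.PosDef := posDef_map hP
  have hmap : (P - M * P * Mᵀ).map Complex.ofReal = Pc - Mc * Pc * Mcᵀ := by
    have hof : ∀ (A : Matrix (Fin n) (Fin n) ℝ),
        A.map Complex.ofReal = (algebraMap ℝ ℂ).mapMatrix A := fun A => rfl
    rw [hMcdef, hPcdef, hof, hof, hof, _root_.map_sub, _root_.map_mul, _root_.map_mul]
    congr 1
  have hQc : (Pc - Mc * Pc * Mcᵀ).PosDef := hmap ▸ posDef_map hQ
  have hc : 0 < star v ⬝ᵥ (Pc *ᵥ v) := hPc.dotProduct_mulVec_pos hv0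
  have hq0 := hQc.dotProduct_mulVec_pos hv0
  have hMch : Mcᵀᴴ = Mc := by
    ext i j
    simp [Matrix.conjTranspose_apply, Matrix.map_apply, hMcdef]
  have key : star v ⬝ᵥ ((Pc - Mc * Pc * Mcᵀ) *ᵥ v)
      = (1 - (Complex.normSq z : ℂ)) * (star v ⬝ᵥ (Pc *ᵥ v)) := by
    rw [Matrix.sub_mulVec, dotProduct_sub]
    have h1 : (Mc * Pc * Mcᵀ) *ᵥ v = Mc *ᵥ (Pc *ᵥ (Mcᵀ *ᵥ v)) := by
      rw [Matrix.mulVec_mulVec, Matrix.mulVec_mulVec]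
    have h2 : star v ᵥ* Mc = star z • star v := by
      calc star v ᵥ* Mc = star v ᵥ* Mcᵀᴴ := by rw [hMch]
        _ = star (Mcᵀ *ᵥ v) := (Matrix.star_mulVec _ _).symm
        _ = star (z • v) := by rw [hv]
        _ = star z • star v := star_smul _ _
    have h3 : ∀ w : Fin n → ℂ, star v ⬝ᵥ (Mc *ᵥ w) = star z * (star v ⬝ᵥ w) := by
      intro w
      rw [Matrix.dotProduct_mulVec, h2, smul_dotProduct, smul_eq_mul]
    rw [h1, hv, Matrix.mulVec_smul, h3, dotProduct_smul, smul_eq_mul,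
      ← mul_assoc, mul_comm (star z) z, mul_comm z (star z), Complex.star_def,
      ← Complex.normSq_eq_conj_mul_self]
    ring
  rw [key] at hq0
  obtain ⟨hcre, hcim⟩ := Complex.lt_def.mp hc
  simp only [Complex.zero_re, Complex.zero_im] at hcre hcim
  have hre2 := (Complex.lt_def.mp hq0).1
  have : (1 - (Complex.normSq z : ℂ)) = ((1 - Complex.normSq z : ℝ) : ℂ) := by
    push_cast; ring
  rw [this] at hre2
  rw [Complex.re_ofReal_mul] at hre2
  simp only [Complex.zero_re] at hre2
  have hs : Complex.normSq z < 1 := by nlinarith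
  have habs : ‖z‖ ^ 2 = Complex.normSq z := by
    rw [← Complex.sq_norm]
  nlinarith [norm_nonneg z]

end DiscreteLyapunovAux

open Matrix DiscreteLyapunovAux

/-- Discrete-time Lyapunov theorem: a real square matrix M has spectral radius < 1
iff there is a symmetric positive definite P with P - M P Mᵀ positive definite. -/
theorem discrete_lyapunov
    (n : ℕ) (M : Matrix (Fin n) (Fin n) ℝ) :
    (∀ z ∈ spectrum ℂ (M.map Complex.ofReal), ‖z‖ < 1)
    ↔ ∃ P : Matrix (Fin n) (Fin n) ℝ, P.PosDef ∧ (P - M * P * Mᵀ).PosDef := by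
  constructor
  · intro h
    rcases eq_or_ne n 0 with hn | hn
    · subst hn
      refine ⟨1, Matrix.PosDef.one, ?_⟩
      have h1 : (1 : Matrix (Fin 0) (Fin 0) ℝ) - M * 1 * Mᵀ = 1 := by
        ext i j
        exact i.elim0
      rw [h1]
      exact Matrix.PosDef.one
    · exact forward hn M h
  · rintro ⟨P, hP, hQ⟩ z hz
    exact backward M P hP hQ hz
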